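/- arXiv:1501.04313 — 3 statements merged into one kernel-verified Lean document; each statement's English description precedes it below -/
import Mathlib

section
/- Fix a finite symbol alphabet Λ, regular languages L_1 and L_2 over Λ, and a fixed word x ∈ Λ*. Then the set {⊗(zw, zxw) : z ∈ L_1, w ∈ L_2} of convolutions is a regular language. -/
/-- The convolution of a pair of words over `Λ`: read the two words in parallel,
padding the shorter with `⋄` (modelled by `none`). -/
def conv2 {Λ : Type} (u v : List Λ) : List (Option Λ × Option Λ) :=
  (List.range (max u.length v.length)).map (fun i => (u[i]?, v[i]?))

namespace ConvAux

open Classical in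
/-- One (deterministic) step of the phase-2 machine. -/
noncomputable def p2step {Λ σ₂ : Type} (M₂ : DFA Λ σ₂) (x : List Λ)
    (t : σ₂ × List (Option Λ)) (c : Option Λ × Option Λ) :
    Option (σ₂ × List (Option Λ)) :=
  let s' : σ₂ := c.1.elim t.1 (M₂.step t.1)
  if t.2.length < x.length then
    if c.2 = x[t.2.length]? then some (s', t.2 ++ [c.1]) else none
  else
    let b : Option Λ := (t.2 ++ [c.1]).headI
    if c.2 = b ∧ b.isSome then some (s', (t.2 ++ [c.1]).tail) else none

noncomputable def p2eval {Λ σ₂ : Type} (M₂ : DFA Λ σ₂) (x : List Λ)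
    (o : Option (σ₂ × List (Option Λ))) (cs : List (Option Λ × Option Λ)) :
    Option (σ₂ × List (Option Λ)) :=
  cs.foldl (fun o c => o.bind fun t => p2step M₂ x t c) o

def p2acc {Λ σ₂ : Type} (M₂ : DFA Λ σ₂) (x : List Λ) (t : σ₂ × List (Option Λ)) : Prop :=
  t.1 ∈ M₂.accept ∧ t.2.length = x.length ∧ ∀ o ∈ t.2, o = none

def diag {Λ : Type} (z : List Λ) : List (Option Λ × Option Λ) :=
  z.map (fun a => (some a, some a))

theorem conv2_eq {Λ : Type} (u v : List Λ) :
    conv2 u v = (List.range (max u.length v.length)).map (fun i => (u[i]?, v[i]?)) := by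
  simp [conv2]

theorem length_conv2 {Λ : Type} (u v : List Λ) :
    (conv2 u v).length = max u.length v.length := by simp [conv2]

theorem getElem?_conv2 {Λ : Type} (u v : List Λ) (i : ℕ) :
    (conv2 u v)[i]? = if i < max u.length v.length then some (u[i]?, v[i]?) else none := by
  rw [conv2_eq]
  by_cases h : i < max u.length v.length
  · rw [List.getElem?_map, List.getElem?_range h]; simp [h]
  · rw [List.getElem?_eq_none (by simpa using h)]; simp [h]

theorem conv_split {Λ : Type} (z w x : List Λ) :
    conv2 (z ++ w) (z ++ x ++ w) = diag z ++ conv2 w (x ++ w) := by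
  apply List.ext_getElem?
  intro i
  have hlen : max (z ++ w).length (z ++ x ++ w).length
      = z.length + max w.length (x.length + w.length) := by
    simp [List.length_append, Nat.add_max_add_left]
  rw [getElem?_conv2]
  by_cases hi : i < z.length
  · rw [List.getElem?_append_left (show i < (diag z).length by simpa [diag] using hi)]
    rw [if_pos (show i < max (z ++ w).length (z ++ x ++ w).length by rw [hlen]; omega)]
    rw [List.getElem?_append_left (show i < (z:List Λ).length by simpa using hi),
        List.getElem?_append_left (show i < ((z:List Λ) ++ x).length by simp; omega),
        List.getElem?_append_left (show i < (z:List Λ).length by simpa using hi)]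
    simp [diag, List.getElem?_map, List.getElem?_eq_getElem hi]
  · have hd : (diag z).length ≤ i := by simpa [diag] using (not_lt.1 hi)
    rw [List.getElem?_append_right hd]
    have hdz : (diag z).length = z.length := by simp [diag]
    rw [hdz, getElem?_conv2]
    have hxw : max w.length ((x:List Λ) ++ w).length = max w.length (x.length + w.length) := by
      simp
    rw [hxw]
    by_cases h2 : i - z.length < max w.length (x.length + w.length)
    · rw [if_pos h2, if_pos (by rw [hlen]; omega)]
      have e1 : (z ++ w)[i]? = w[i - z.length]? := List.getElem?_append_right (by omega)
      have e2 : (z ++ x ++ w)[i]? = (x ++ w)[i - z.length]? := by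
        rw [List.append_assoc]; exact List.getElem?_append_right (by omega)
      rw [e1, e2]
    · rw [if_neg h2, if_neg (by rw [hlen]; omega)]


theorem p2eval_append {Λ σ₂ : Type} (M₂ : DFA Λ σ₂) (x : List Λ)
    (o : Option (σ₂ × List (Option Λ))) (cs : List (Option Λ × Option Λ))
    (c : Option Λ × Option Λ) :
    p2eval M₂ x o (cs ++ [c]) = (p2eval M₂ x o cs).bind (fun t => p2step M₂ x t c) := by
  simp [p2eval, List.foldl_append]

theorem p2step_lt {Λ σ₂ : Type} (M₂ : DFA Λ σ₂) (x : List Λ) (s : σ₂)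
    (buf : List (Option Λ)) (p q : Option Λ) (h : buf.length < x.length)
    (hq : q = x[buf.length]?) :
    p2step M₂ x (s, buf) (p, q) = some (p.elim s (M₂.step s), buf ++ [p]) := by
  simp only [p2step]
  rw [if_pos h, if_pos hq]

theorem p2step_ge {Λ σ₂ : Type} (M₂ : DFA Λ σ₂) (x : List Λ) (s : σ₂)
    (buf rest : List (Option Λ)) (p q b : Option Λ) (h : ¬ buf.length < x.length)
    (hb : buf ++ [p] = b :: rest) (hq : q = b) (hsome : b.isSome) :
    p2step M₂ x (s, buf) (p, q) = some (p.elim s (M₂.step s), rest) := by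
  simp only [p2step]
  rw [if_neg h, hb]
  exact if_pos ⟨hq, hsome⟩

theorem p2step_none {Λ σ₂ : Type} (M₂ : DFA Λ σ₂) (x : List Λ) (s : σ₂)
    (buf : List (Option Λ)) (p q : Option Λ) :
    p2step M₂ x (s, buf) (p, q) = none ↔
      ¬ ((buf.length < x.length ∧ q = x[buf.length]?) ∨
        (¬ buf.length < x.length ∧ q = (buf ++ [p]).headI ∧ (buf ++ [p]).headI.isSome)) := by
  simp only [p2step]
  by_cases h : buf.length < x.length
  · rw [if_pos h]
    by_cases h2 : q = x[buf.length]?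
    · rw [if_pos h2]; simp [h, h2]
    · rw [if_neg h2]
      rw [List.getElem?_eq_getElem h] at h2
      simp [h, h2]
  · rw [if_neg h]
    by_cases h2 : q = (buf ++ [p]).headI ∧ (buf ++ [p]).headI.isSome
    · rw [if_pos h2]; simp [h, h2]
    · rw [if_neg h2]
      simp only [eq_self_iff_true, true_iff]
      tauto

/-- The buffer after `j` steps of the canonical phase-2 run. -/
def bufspec {Λ : Type} (x w : List Λ) (j : ℕ) : List (Option Λ) :=
  (List.range (min j x.length)).map (fun i => w[j - min j x.length + i]?)

theorem bufspec_length {Λ : Type} (x w : List Λ) (j : ℕ) :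
    (bufspec x w j).length = min j x.length := by simp [bufspec]

theorem bufspec_succ_lt {Λ : Type} (x w : List Λ) {j : ℕ} (hj : j < x.length) :
    bufspec x w (j+1) = bufspec x w j ++ [w[j]?] := by
  have hm : min j x.length = j := Nat.min_eq_left (by omega)
  have hm' : min (j+1) x.length = (j+1) := Nat.min_eq_left (by omega)
  simp only [bufspec, hm, hm', Nat.sub_self, Nat.zero_add]
  rw [List.range_succ, List.map_append]
  rfl

theorem bufspec_succ_ge {Λ : Type} (x w : List Λ) {j : ℕ} (hn : x.length ≤ j) :
    bufspec x w j ++ [w[j]?] = w[j - x.length]? :: bufspec x w (j+1) := by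
  have hm : min j x.length = x.length := Nat.min_eq_right hn
  have hm' : min (j+1) x.length = x.length := Nat.min_eq_right (by omega)
  simp only [bufspec, hm, hm']
  have hwj : (w[j]? : Option Λ) = w[j - x.length + x.length]? := by
    rw [Nat.sub_add_cancel hn]
  have h2 : (List.range x.length).map (fun i => (w[j - x.length + i]? : Option Λ))
        ++ [w[j - x.length + x.length]?]
      = (List.range (x.length + 1)).map (fun i => (w[j - x.length + i]? : Option Λ)) := by
    rw [List.range_succ, List.map_append]
    rfl
  rw [hwj, h2, List.range_succ_eq_map, List.map_cons, List.map_map]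
  refine List.cons_eq_cons.mpr ⟨?_, ?_⟩
  · show (w[j - x.length + 0]? : Option Λ) = w[j - x.length]?
    rw [Nat.add_zero]
  · apply List.map_congr_left
    intro i _
    show (w[j - x.length + (i+1)]? : Option Λ) = w[j + 1 - x.length + i]?
    have := congrArg (fun t => (w[t]? : Option Λ))
      (show j - x.length + (i+1) = j + 1 - x.length + i by omega)
    simpa using this

theorem p2_run_take {Λ σ₂ : Type} (M₂ : DFA Λ σ₂) (x w : List Λ) (s₀ : σ₂) :
    ∀ j, j ≤ x.length + w.length →
    p2eval M₂ x (some (s₀, [])) ((conv2 w (x ++ w)).take j)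
      = some (M₂.evalFrom s₀ (w.take j), bufspec x w j) := by
  intro j
  induction j with
  | zero => intro _; simp [p2eval, bufspec]
  | succ j ih =>
    intro hj
    have hj' : j < x.length + w.length := by omega
    have hlen : (conv2 w (x ++ w)).length = x.length + w.length := by
      simp [length_conv2]
    have hc : (conv2 w (x ++ w))[j]? = some (w[j]?, (x ++ w)[j]?) := by
      rw [getElem?_conv2, if_pos (by simp; omega)]
    rw [List.take_succ, hc]
    simp only [Option.toList_some]
    rw [p2eval_append, ih (by omega), Option.bind_some]
    have hs' : (w[j]? : Option Λ).elim (M₂.evalFrom s₀ (w.take j))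
        (M₂.step (M₂.evalFrom s₀ (w.take j))) = M₂.evalFrom s₀ (w.take (j+1)) := by
      by_cases hjk : j < w.length
      · have ht : w.take (j+1) = w.take j ++ [w[j]] := by
          rw [List.take_succ, List.getElem?_eq_getElem hjk]; rfl
        rw [List.getElem?_eq_getElem hjk, ht, DFA.evalFrom_append_singleton]
        rfl
      · rw [List.getElem?_eq_none (by omega), List.take_of_length_le (by omega),
          List.take_of_length_le (by omega)]
        rfl
    by_cases hjn : j < x.length
    · -- first branch: reading the `x` part on the second track
      have hcl : (bufspec x w j).length = j := by
        rw [bufspec_length, Nat.min_eq_left (by omega)]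
      have hq : ((x ++ w) : List Λ)[j]? = x[(bufspec x w j).length]? := by
        rw [hcl]; exact List.getElem?_append_left hjn
      rw [p2step_lt M₂ x _ _ _ _ (by rw [hcl]; exact hjn) hq, hs', ← bufspec_succ_lt x w hjn]
    · -- second branch: popping the buffer
      have hn : x.length ≤ j := by omega
      have hcl : (bufspec x w j).length = x.length := by
        rw [bufspec_length, Nat.min_eq_right hn]
      have hq : ((x ++ w) : List Λ)[j]? = w[j - x.length]? :=
        List.getElem?_append_right hn
      have hjw : j - x.length < w.length := by omega
      have hpop := bufspec_succ_ge x w (j := j) hn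
      have hsome : (w[j - x.length]? : Option Λ).isSome := by
        rw [List.getElem?_eq_getElem hjw]; rfl
      rw [p2step_ge M₂ x _ _ _ _ _ _ (by rw [hcl]; omega) hpop hq hsome, hs']

theorem p2_run {Λ σ₂ : Type} (M₂ : DFA Λ σ₂) (x w : List Λ) (s₀ : σ₂) :
    p2eval M₂ x (some (s₀, [])) (conv2 w (x ++ w))
      = some (M₂.evalFrom s₀ w, List.replicate x.length none) := by
  have h := p2_run_take M₂ x w s₀ (x.length + w.length) le_rfl
  rw [List.take_of_length_le (by simp [length_conv2])] at h
  have h1 : w.take (x.length + w.length) = w := List.take_of_length_le (by omega)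
  have h2 : bufspec x w (x.length + w.length) = List.replicate x.length none := by
    apply List.eq_replicate_iff.2
    constructor
    · rw [bufspec_length, Nat.min_eq_right (by omega)]
    · intro b hb
      simp only [bufspec] at hb
      rcases List.mem_map.1 hb with ⟨i, hi, rfl⟩
      refine List.getElem?_eq_none ?_
      rw [List.mem_range] at hi
      omega
  rw [h, h1, h2]


theorem p2step_eq_some {Λ σ₂ : Type} {M₂ : DFA Λ σ₂} {x : List Λ} {s s' : σ₂}
    {buf buf' : List (Option Λ)} {p q : Option Λ}
    (h : p2step M₂ x (s, buf) (p, q) = some (s', buf')) :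
    s' = p.elim s (M₂.step s) ∧
    ((buf.length < x.length ∧ q = x[buf.length]? ∧ buf' = buf ++ [p]) ∨
     (¬ buf.length < x.length ∧ q = (buf ++ [p]).headI ∧ (buf ++ [p]).headI.isSome ∧
        buf' = (buf ++ [p]).tail)) := by
  simp only [p2step] at h
  by_cases h1 : buf.length < x.length
  · rw [if_pos h1] at h
    by_cases h2 : q = x[buf.length]?
    · rw [if_pos h2] at h
      simp only [Option.some.injEq, Prod.mk.injEq] at h
      exact ⟨h.1.symm, Or.inl ⟨h1, h2, h.2.symm⟩⟩
    · rw [if_neg h2] at h; cases h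
  · rw [if_neg h1] at h
    by_cases h2 : q = (buf ++ [p]).headI ∧ ((buf ++ [p]).headI).isSome
    · rw [if_pos h2] at h
      simp only [Option.some.injEq, Prod.mk.injEq] at h
      exact ⟨h.1.symm, Or.inr ⟨h1, h2.1, h2.2, h.2.symm⟩⟩
    · rw [if_neg h2] at h; cases h

theorem p2_sound {Λ σ₂ : Type} (M₂ : DFA Λ σ₂) (x : List Λ) (s₀ : σ₂) :
    ∀ cs : List (Option Λ × Option Λ), ∀ s : σ₂, ∀ buf : List (Option Λ),
    p2eval M₂ x (some (s₀, [])) cs = some (s, buf) →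
    buf = (cs.map Prod.fst).drop (cs.length - x.length) ∧
    (∀ i (hi : i < cs.length),
        (cs[i].2 = if i < x.length then x[i]? else cs[i - x.length].1) ∧
        (x.length ≤ i → (cs[i - x.length].1).isSome)) ∧
    s = M₂.evalFrom s₀ (cs.map Prod.fst).reduceOption := by
  intro cs
  induction cs using List.reverseRecOn with
  | nil =>
    intro s buf h
    simp only [p2eval, List.foldl_nil, Option.some.injEq, Prod.mk.injEq] at h
    obtain ⟨hs, hb⟩ := h
    refine ⟨by simp [hb.symm], by simp, by simp [hs.symm]⟩
  | append_singleton cs c ih =>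
    intro s buf h
    rw [p2eval_append] at h
    obtain ⟨⟨s₁, buf₁⟩, h₁, h₂⟩ := Option.bind_eq_some_iff.1 h
    obtain ⟨ha, hb, hc⟩ := ih s₁ buf₁ h₁
    obtain ⟨p, q⟩ := c
    obtain ⟨hs, hcase⟩ := p2step_eq_some h₂
    have hlen₁ : buf₁.length = cs.length - (cs.length - x.length) := by
      rw [ha, List.length_drop, List.length_map]
    have hmap : ((cs ++ [(p, q)]).map Prod.fst) = cs.map Prod.fst ++ [p] := by
      simp
    have hlen' : (cs ++ [(p, q)]).length = cs.length + 1 := by simp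
    have hredfin : s = M₂.evalFrom s₀ ((cs ++ [(p, q)]).map Prod.fst).reduceOption := by
      rw [hmap, List.reduceOption_append, hs, hc]
      cases p with
      | none => simp [List.reduceOption]
      | some a => simp [List.reduceOption, DFA.evalFrom_append_singleton]
    -- index transport for old indices
    have hold : ∀ i (hi : i < cs.length),
        ((cs ++ [(p, q)])[i]'(by simp; omega)) = cs[i] := fun i hi =>
      List.getElem_append_left hi
    rcases hcase with ⟨hlt, hq, hbuf⟩ | ⟨hge, hq, hsome, hbuf⟩
    · -- accumulating branch; here cs.length < x.length
      have hjlt : cs.length < x.length := by omega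
      have hbuf₁ : buf₁ = cs.map Prod.fst := by
        rw [ha, show cs.length - x.length = 0 by omega, List.drop_zero]
      have hblen : buf₁.length = cs.length := by rw [hbuf₁, List.length_map]
      refine ⟨?_, ?_, hredfin⟩
      · rw [hbuf, hmap, hbuf₁, hlen', show cs.length + 1 - x.length = 0 by omega,
          List.drop_zero]
      · intro i hi
        rw [hlen'] at hi
        rcases Nat.lt_or_ge i cs.length with hi' | hi'
        · have e1 : ((cs ++ [(p, q)])[i]'(by simp; omega)) = cs[i] := hold i hi'
          have e2 : ((cs ++ [(p, q)])[i - x.length]'(by simp; omega))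
              = cs[i - x.length]'(by omega) := hold _ (by omega)
          rw [e1, e2]
          exact hb i hi'
        · have hieq : i = cs.length := by omega
          subst hieq
          have e1 : ((cs ++ [(p, q)])[cs.length]'(by simp)) = (p, q) := by
            rw [List.getElem_append_right (le_refl _)]
            simp
          rw [e1]
          constructor
          · rw [if_pos hjlt, ← hblen]
            exact hq
          · intro hni; omega
    · -- popping branch; here x.length ≤ cs.length and buf₁.length = x.length
      have hjge : x.length ≤ cs.length := by omega
      have hblen : buf₁.length = x.length := by omega
      set d := cs.length - x.length with hd
      have hdlt : d < (cs.map Prod.fst ++ [p]).length := by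
        rw [List.length_append, List.length_map, List.length_singleton]
        omega
      have happ : buf₁ ++ [p] = (cs.map Prod.fst ++ [p]).drop d := by
        rw [ha, List.drop_append_of_le_length (by rw [List.length_map]; omega)]
      have hcons : (cs.map Prod.fst ++ [p]).drop d
          = (cs.map Prod.fst ++ [p])[d] :: (cs.map Prod.fst ++ [p]).drop (d+1) :=
        List.drop_eq_getElem_cons hdlt
      have hhead : (buf₁ ++ [p]).headI = (cs.map Prod.fst ++ [p])[d] := by
        rw [happ, hcons]; rfl
      have htail : (buf₁ ++ [p]).tail = (cs.map Prod.fst ++ [p]).drop (d+1) := by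
        rw [happ, hcons]; rfl
      have hdlt2 : d < (cs ++ [(p, q)]).length := by simp; omega
      have hdlt3 : d < ((cs ++ [(p, q)]).map Prod.fst).length := by
        rw [List.length_map]; exact hdlt2
      have hgd : ((cs.map Prod.fst ++ [p])[d]'hdlt) = ((cs ++ [(p, q)])[d]'hdlt2).1 := by
        have h1 : ((cs ++ [(p, q)]).map Prod.fst)[d]'hdlt3 = ((cs ++ [(p, q)])[d]'hdlt2).1 :=
          List.getElem_map _
        have h2 : ((cs.map Prod.fst ++ [p])[d]'hdlt)
            = ((cs ++ [(p, q)]).map Prod.fst)[d]'hdlt3 :=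
          List.getElem_of_eq hmap.symm hdlt
        exact h2.trans h1
      refine ⟨?_, ?_, hredfin⟩
      · rw [hbuf, htail, hmap, hlen', show cs.length + 1 - x.length = d + 1 by omega]
      · intro i hi
        rw [hlen'] at hi
        rcases Nat.lt_or_ge i cs.length with hi' | hi'
        · have e1 : ((cs ++ [(p, q)])[i]'(by simp; omega)) = cs[i] := hold i hi'
          have e2 : ((cs ++ [(p, q)])[i - x.length]'(by simp; omega))
              = cs[i - x.length]'(by omega) := hold _ (by omega)
          rw [e1, e2]
          exact hb i hi'
        · have hieq : i = cs.length := by omega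
          subst hieq
          have e1 : ((cs ++ [(p, q)])[cs.length]'(by simp)) = (p, q) := by
            rw [List.getElem_append_right (le_refl _)]
            simp
          rw [e1]
          constructor
          · rw [if_neg (by omega)]
            exact hq.trans (hhead.trans hgd)
          · intro _
            have h3 := hsome
            rw [hhead, hgd] at h3
            exact h3


theorem exists_map_some {Λ : Type} (l : List (Option Λ)) (h : ∀ o ∈ l, o.isSome) :
    ∃ w : List Λ, l = w.map some := by
  induction l with
  | nil => exact ⟨[], rfl⟩
  | cons a l ih =>
    obtain ⟨w, hw⟩ := ih (fun o ho => h o (List.mem_cons_of_mem _ ho))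
    obtain ⟨a', ha⟩ := Option.isSome_iff_exists.1 (h a (List.mem_cons_self))
    exact ⟨a' :: w, by simp [ha, hw]⟩

theorem reduceOption_map_some' {Λ : Type} (w : List Λ) :
    (w.map some).reduceOption = w := by
  induction w with
  | nil => rfl
  | cons a w ih => simp [List.reduceOption_cons_of_some, ih]

theorem reduceOption_replicate_none' {Λ : Type} (n : ℕ) :
    (List.replicate n (none : Option Λ)).reduceOption = [] := by
  induction n with
  | zero => rfl
  | succ n ih => simp [List.replicate_succ, List.reduceOption_cons_of_none, ih]

theorem p2_extract {Λ σ₂ : Type} (M₂ : DFA Λ σ₂) (x : List Λ) (s₀ : σ₂)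
    (cs : List (Option Λ × Option Λ)) (s : σ₂) (buf : List (Option Λ))
    (hrun : p2eval M₂ x (some (s₀, [])) cs = some (s, buf))
    (hacc : p2acc M₂ x (s, buf)) :
    ∃ w : List Λ, s = M₂.evalFrom s₀ w ∧ cs = conv2 w (x ++ w) := by
  obtain ⟨ha, hb, hc⟩ := p2_sound M₂ x s₀ cs s buf hrun
  obtain ⟨hst, hblen, hbnone⟩ := hacc
  have hpcslen : (cs.map Prod.fst).length = cs.length := List.length_map _
  have hjn : x.length ≤ cs.length := by
    have := congrArg List.length ha
    rw [hblen, List.length_drop, List.length_map] at this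
    omega
  have hsome1 : ∀ i (hi : i < cs.length - x.length),
      ((cs[i]'(by omega)).1).isSome := by
    intro i hi
    have h2 := (hb (i + x.length) (by omega)).2 (by omega)
    simpa [Nat.add_sub_cancel] using h2
  have hdrop : (cs.map Prod.fst).drop (cs.length - x.length)
      = List.replicate x.length none := by
    rw [← ha]
    exact List.eq_replicate_iff.2 ⟨hblen, hbnone⟩
  have hallsome : ∀ o ∈ (cs.map Prod.fst).take (cs.length - x.length), o.isSome := by
    intro o ho
    obtain ⟨i, hi, he⟩ := List.mem_iff_getElem.1 ho
    have hi' : i < cs.length - x.length := by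
      rw [List.length_take, List.length_map] at hi
      omega
    rw [List.getElem_take] at he
    rw [← he, List.getElem_map]
    exact hsome1 i hi'
  obtain ⟨w, hw⟩ := exists_map_some _ hallsome
  have hwlen : w.length = cs.length - x.length := by
    have := congrArg List.length hw
    rw [List.length_take, List.length_map, List.length_map] at this
    omega
  have hpcs : cs.map Prod.fst = w.map some ++ List.replicate x.length none := by
    rw [← List.take_append_drop (cs.length - x.length) (cs.map Prod.fst), hw, hdrop]
  have hred : (cs.map Prod.fst).reduceOption = w := by
    rw [hpcs, List.reduceOption_append, reduceOption_map_some',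
      reduceOption_replicate_none', List.append_nil]
  have hfst : ∀ i (hi : i < cs.length), (cs[i]'hi).1 = w[i]? := by
    intro i hi
    have hi2 : i < (cs.map Prod.fst).length := by omega
    have h1 : (cs.map Prod.fst)[i]'hi2 = (cs[i]'hi).1 := List.getElem_map _
    have hi3 : i < (w.map some ++ List.replicate x.length none).length := by
      rw [List.length_append, List.length_map, List.length_replicate]
      omega
    have h2 : (cs.map Prod.fst)[i]'hi2
        = (w.map some ++ List.replicate x.length none)[i]'hi3 :=
      List.getElem_of_eq hpcs hi2
    rw [← h1, h2]
    by_cases hik : i < cs.length - x.length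
    · have him : i < (w.map some).length := by rw [List.length_map]; omega
      rw [List.getElem_append_left him, List.getElem_map,
        List.getElem?_eq_getElem (by omega)]
    · rw [List.getElem_append_right (by rw [List.length_map]; omega)]
      rw [List.getElem_replicate]
      exact (List.getElem?_eq_none (by omega)).symm
  refine ⟨w, by rw [hc, hred], ?_⟩
  apply List.ext_getElem?
  intro i
  rw [getElem?_conv2]
  have hmax : max w.length ((x ++ w) : List Λ).length = cs.length := by
    rw [List.length_append]
    omega
  by_cases hij : i < cs.length
  · rw [if_pos (by omega), List.getElem?_eq_getElem hij]
    have hsnd := (hb i hij).1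
    congr 1
    refine Prod.ext ?_ ?_
    · exact hfst i hij
    · show (cs[i]'hij).2 = ((x ++ w) : List Λ)[i]?
      rw [hsnd]
      by_cases hin : i < x.length
      · rw [if_pos hin, List.getElem?_append_left hin]
      · rw [if_neg hin, List.getElem?_append_right (by omega),
          hfst (i - x.length) (by omega)]
  · rw [if_neg (by omega), List.getElem?_eq_none (by omega)]


theorem p2eval_buf_le {Λ σ₂ : Type} {M₂ : DFA Λ σ₂} {x : List Λ} {s₀ s : σ₂}
    {buf : List (Option Λ)} {cs : List (Option Λ × Option Λ)}
    (h : p2eval M₂ x (some (s₀, [])) cs = some (s, buf)) : buf.length ≤ x.length := by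
  obtain ⟨ha, -, -⟩ := p2_sound M₂ x s₀ cs s buf h
  rw [ha, List.length_drop, List.length_map]
  omega

instance bufFinite (Λ : Type) [Fintype Λ] (n : ℕ) :
    Finite {l : List (Option Λ) // l.length ≤ n} := by
  apply Finite.of_injective
    (fun l : {l : List (Option Λ) // l.length ≤ n} => (fun i : Fin (n+1) => l.1[i.1]?))
  intro l₁ l₂ hf
  apply Subtype.ext
  apply List.ext_getElem?
  intro i
  by_cases hi : i < n + 1
  · exact congrFun hf ⟨i, hi⟩
  · rw [List.getElem?_eq_none (by have := l₁.2; omega),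
      List.getElem?_eq_none (by have := l₂.2; omega)]

/-- The NFA recognising `{diag z ++ conv2 w (x++w) : z ∈ L₁, w ∈ L₂}`. -/
def theNFA {Λ σ₁ σ₂ : Type} (M₁ : DFA Λ σ₁) (M₂ : DFA Λ σ₂) (x : List Λ) :
    NFA (Option Λ × Option Λ) (σ₁ ⊕ σ₂ × {l : List (Option Λ) // l.length ≤ x.length}) where
  step st c :=
    match st with
    | Sum.inl s => {st' | (∃ a : Λ, c = (some a, some a) ∧ st' = Sum.inl (M₁.step s a)) ∨
        (s ∈ M₁.accept ∧ ∃ t : σ₂ × List (Option Λ),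
          p2step M₂ x (M₂.start, []) c = some t ∧ ∃ h : t.2.length ≤ x.length,
            st' = Sum.inr (t.1, ⟨t.2, h⟩))}
    | Sum.inr (s, buf) => {st' | ∃ t : σ₂ × List (Option Λ),
        p2step M₂ x (s, buf.1) c = some t ∧ ∃ h : t.2.length ≤ x.length,
          st' = Sum.inr (t.1, ⟨t.2, h⟩)}
  start := {Sum.inl M₁.start}
  accept := {st | (∃ s, st = Sum.inl s ∧ s ∈ M₁.accept ∧ x.length = 0 ∧ M₂.start ∈ M₂.accept)
    ∨ (∃ s buf, st = Sum.inr (s, buf) ∧ p2acc M₂ x (s, buf.1))}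

theorem eval_spec {Λ σ₁ σ₂ : Type} (M₁ : DFA Λ σ₁) (M₂ : DFA Λ σ₂) (x : List Λ) :
    ∀ cs : List (Option Λ × Option Λ), (theNFA M₁ M₂ x).eval cs =
      {st | (∃ z : List Λ, cs = diag z ∧ st = Sum.inl (M₁.evalFrom M₁.start z)) ∨
        (∃ z e, cs = diag z ++ e ∧ e ≠ [] ∧ M₁.evalFrom M₁.start z ∈ M₁.accept ∧
          ∃ t : σ₂ × List (Option Λ), p2eval M₂ x (some (M₂.start, [])) e = some t ∧
            ∃ h : t.2.length ≤ x.length, st = Sum.inr (t.1, ⟨t.2, h⟩))} := by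
  intro cs
  induction cs using List.reverseRecOn with
  | nil =>
    ext st
    simp only [NFA.eval_nil, theNFA, Set.mem_singleton_iff, Set.mem_setOf_eq]
    constructor
    · rintro rfl
      exact Or.inl ⟨[], rfl, rfl⟩
    · rintro (⟨z, hz, rfl⟩ | ⟨z, e, hze, hne, _⟩)
      · have : z = [] := by
          cases z with
          | nil => rfl
          | cons a z => simp [diag] at hz
        subst this
        rfl
      · exfalso
        apply hne
        rcases List.append_eq_nil_iff.1 hze.symm with ⟨-, h2⟩
        exact h2
  | append_singleton cs c ih =>
    ext st
    rw [NFA.eval_append_singleton, NFA.mem_stepSet]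
    simp only [ih, Set.mem_setOf_eq]
    constructor
    · rintro ⟨t, ht, hst⟩
      rcases ht with ⟨z, rfl, rfl⟩ | ⟨z, e, rfl, hne, hz, t₀, he, h₀, rfl⟩
      · -- from a phase-1 state
        rcases hst with ⟨a, rfl, rfl⟩ | ⟨hacc, t', ht', h', rfl⟩
        · refine Or.inl ⟨z ++ [a], ?_, ?_⟩
          · simp [diag]
          · rw [DFA.evalFrom_append_singleton]
        · refine Or.inr ⟨z, [c], rfl, by simp, hacc, t', ?_, h', rfl⟩
          simp [p2eval, ht']
      · -- from a phase-2 state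
        rcases hst with ⟨t', ht', h', rfl⟩
        refine Or.inr ⟨z, e ++ [c], by rw [List.append_assoc], by simp, hz, t', ?_, h', rfl⟩
        rw [p2eval_append, he, Option.bind_some]
        exact ht'
    · rintro (⟨z, hz, rfl⟩ | ⟨z, e, hze, hne, hzacc, t, he, h, rfl⟩)
      · -- target phase-1 state
        rcases z.eq_nil_or_concat with rfl | ⟨z₀, a, rfl⟩
        · simp [diag] at hz
        · simp only [List.concat_eq_append] at hz ⊢
          have hdz : diag (z₀ ++ [a]) = diag z₀ ++ [(some a, some a)] := by simp [diag]
          rw [hdz] at hz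
          obtain ⟨hcs, hc⟩ := List.append_inj' hz (by simp)
          refine ⟨Sum.inl (M₁.evalFrom M₁.start z₀), Or.inl ⟨z₀, hcs, rfl⟩, ?_⟩
          refine Or.inl ⟨a, by rw [List.singleton_inj] at hc; exact hc, ?_⟩
          rw [DFA.evalFrom_append_singleton]
      · -- target phase-2 state
        rcases e.eq_nil_or_concat with rfl | ⟨e₀, c', rfl⟩
        · exact absurd rfl hne
        · simp only [List.concat_eq_append] at hze he ⊢
          rw [← List.append_assoc] at hze
          obtain ⟨hcs, hc⟩ := List.append_inj' hze (by simp)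
          rw [List.singleton_inj] at hc
          subst hc
          rw [p2eval_append] at he
          obtain ⟨t₀, h₁, h₂⟩ := Option.bind_eq_some_iff.1 he
          rcases e₀.eq_nil_or_concat with rfl | ⟨e₁, c₁, rfl⟩
          · -- jump from phase 1 exactly now
            simp only [List.append_nil] at hcs
            have ht₀ : t₀ = (M₂.start, []) := by
              simp only [p2eval, List.foldl_nil, Option.some.injEq] at h₁
              exact h₁.symm
            subst ht₀
            refine ⟨Sum.inl (M₁.evalFrom M₁.start z), Or.inl ⟨z, hcs, rfl⟩, ?_⟩
            exact Or.inr ⟨hzacc, t, h₂, h, rfl⟩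
          · -- already in phase 2
            simp only [List.concat_eq_append] at hcs h₁ ⊢
            have h₀ : t₀.2.length ≤ x.length := p2eval_buf_le (s := t₀.1)
              (buf := t₀.2) (by rw [← h₁])
            refine ⟨Sum.inr (t₀.1, ⟨t₀.2, h₀⟩), Or.inr ⟨z, e₁ ++ [c₁], hcs, by simp,
              hzacc, t₀, h₁, h₀, rfl⟩, ?_⟩
            exact ⟨t, h₂, h, rfl⟩

end ConvAux

/-- For regular languages `L₁, L₂` over a finite alphabet `Λ` and a fixed word
`x ∈ Λ*`, the language `{⊗(zw, zxw) : z ∈ L₁, w ∈ L₂}` is regular. -/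
theorem convolution_insert_fixed_word_regular {Λ : Type} [Fintype Λ]
    (L₁ L₂ : Language Λ) (hL₁ : L₁.IsRegular) (hL₂ : L₂.IsRegular) (x : List Λ) :
    Language.IsRegular
      {c : List (Option Λ × Option Λ) |
        ∃ z ∈ L₁, ∃ w ∈ L₂, c = conv2 (z ++ w) (z ++ x ++ w)} := by
  classical
  obtain ⟨σ₁, _, M₁, hM₁⟩ := hL₁
  obtain ⟨σ₂, _, M₂, hM₂⟩ := hL₂
  open ConvAux in
  refine ⟨Set (σ₁ ⊕ σ₂ × {l : List (Option Λ) // l.length ≤ x.length}),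
    Fintype.ofFinite _, (theNFA M₁ M₂ x).toDFA, ?_⟩
  rw [NFA.toDFA_correct]
  ext cs
  rw [NFA.mem_accepts]
  show (∃ st ∈ (theNFA M₁ M₂ x).accept, st ∈ (theNFA M₁ M₂ x).eval cs) ↔ _
  rw [ConvAux.eval_spec M₁ M₂ x cs]
  constructor
  · rintro ⟨st, hacc, heval⟩
    rcases heval with ⟨z, rfl, rfl⟩ | ⟨z, e, rfl, hne, hz, t, he, hle, rfl⟩
    · -- ended in phase 1: only the `x = [] ∧ w = []` acceptance applies
      rcases hacc with ⟨s, hs, hs1, hx0, hs2⟩ | ⟨s, buf, hs, -⟩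
      · rw [Sum.inl.injEq] at hs
        have hx : x = [] := List.length_eq_zero_iff.1 hx0
        refine ⟨z, ?_, [], ?_, ?_⟩
        · rw [← hM₁, DFA.mem_accepts]
          show M₁.evalFrom M₁.start z ∈ M₁.accept
          rw [hs]
          exact hs1
        · rw [← hM₂, DFA.mem_accepts]
          exact hs2
        · rw [ConvAux.conv_split z [] x, hx]
          simp [conv2, ConvAux.diag]
      · cases hs
    · -- ended in phase 2
      rcases hacc with ⟨s, hs, -⟩ | ⟨s, buf, hs, hp2⟩
      · cases hs
      · rw [Sum.inr.injEq, Prod.mk.injEq] at hs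
        obtain ⟨hs1, hs2⟩ := hs
        have hbuf : buf.1 = t.2 := by rw [← hs2]
        have hp2' : ConvAux.p2acc M₂ x (t.1, t.2) := by
          rw [hs1, ← hbuf]
          exact hp2
        obtain ⟨w, hsw, hew⟩ := ConvAux.p2_extract M₂ x M₂.start e t.1 t.2 he hp2'
        refine ⟨z, ?_, w, ?_, ?_⟩
        · rw [← hM₁, DFA.mem_accepts]
          exact hz
        · rw [← hM₂, DFA.mem_accepts]
          show M₂.evalFrom M₂.start w ∈ M₂.accept
          rw [← hsw]
          exact hp2'.1
        · rw [ConvAux.conv_split z w x, hew]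
  · rintro ⟨z, hzL, w, hwL, rfl⟩
    rw [← hM₁, DFA.mem_accepts] at hzL
    rw [← hM₂, DFA.mem_accepts] at hwL
    rw [ConvAux.conv_split z w x]
    by_cases he : conv2 w (x ++ w) = ([] : List (Option Λ × Option Λ))
    · have hlen : x.length + w.length = 0 := by
        have h := congrArg List.length he
        rw [ConvAux.length_conv2, List.length_append, List.length_nil,
          Nat.max_eq_right (by omega : w.length ≤ x.length + w.length)] at h
        exact h
      have hx : x = [] := List.length_eq_zero_iff.1 (by omega)
      have hw : w = [] := List.length_eq_zero_iff.1 (by omega)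
      refine ⟨Sum.inl (M₁.evalFrom M₁.start z), Or.inl ⟨M₁.evalFrom M₁.start z, rfl,
        hzL, by omega, ?_⟩, Or.inl ⟨z, by rw [he, List.append_nil], rfl⟩⟩
      subst hw
      exact hwL
    · refine ⟨Sum.inr (M₂.evalFrom M₂.start w,
        ⟨List.replicate x.length none, by rw [List.length_replicate]⟩),
        Or.inr ⟨M₂.evalFrom M₂.start w, _, rfl, ?_, ?_, ?_⟩,
        Or.inr ⟨z, conv2 w (x ++ w), rfl, he, hzL,
          (M₂.evalFrom M₂.start w, List.replicate x.length none),
          ConvAux.p2_run M₂ x w M₂.start, by rw [List.length_replicate], rfl⟩⟩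
      · exact hwL
      · exact List.length_replicate
      · intro o ho
        exact List.eq_of_mem_replicate ho
end

section
/- Let g ∈ F have standard infinite normal form x_{i_1}^{e_1} ⋯ x_{i_m}^{e_m} x_{j_n}^{-f_n} ⋯ x_{j_1}^{-f_1}, set D = Σ e_l + Σ f_l + i_m + j_n, and let D' = Σ e_l + Σ f_l + max{i_m, j_n} be the length of its L_∞ normal form. Then D ≤ D' (interpreting D with the convention of the paper) fails in general, but D' ≤ D ≤ 2D' and consequently D'/12 − 2 ≤ l(g) ≤ 3D', where l(g) is word length with respect to {x_0, x_1}; hence L_∞ is a quasigeodesic normal form. -/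
/-- The relators of Thompson's group `F` in its standard infinite presentation:
`x_j x_i = x_i x_{j+1}` whenever `i < j`. -/
def thompsonRels : Set (FreeGroup ℕ) :=
  {r | ∃ i j : ℕ, i < j ∧
    r = FreeGroup.of j * FreeGroup.of i * (FreeGroup.of (j + 1))⁻¹ * (FreeGroup.of i)⁻¹}

/-- Thompson's group `F`, presented by `⟨x_0, x_1, … | x_j x_i = x_i x_{j+1} (i < j)⟩`. -/
abbrev ThompsonF : Type := PresentedGroup thompsonRels

/-- The generator `x_n` of Thompson's group `F`. -/
def x (n : ℕ) : ThompsonF := PresentedGroup.of n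

/-- Word length of `g ∈ F` with respect to the generating set `{x_0^{±1}, x_1^{±1}}`. -/
noncomputable def wlen (g : ThompsonF) : ℕ :=
  sInf {n | ∃ w : List ThompsonF, w.length = n ∧
    (∀ y ∈ w, y ∈ ({x 0, (x 0)⁻¹, x 1, (x 1)⁻¹} : Set ThompsonF)) ∧ w.prod = g}

namespace LinfAux

def gens : Set ThompsonF := {x 0, (x 0)⁻¹, x 1, (x 1)⁻¹}

/-- `g` admits a word of length `k` in the generators. -/
def Wit (g : ThompsonF) (k : ℕ) : Prop :=
  ∃ w : List ThompsonF, w.length = k ∧ (∀ y ∈ w, y ∈ gens) ∧ w.prod = g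

theorem wlen_le {g : ThompsonF} {k : ℕ} (h : Wit g k) : wlen g ≤ k :=
  Nat.sInf_le h

theorem Wit.mul {a b : ThompsonF} {p q : ℕ} (ha : Wit a p) (hb : Wit b q) :
    Wit (a * b) (p + q) := by
  obtain ⟨w₁, h1, h2, h3⟩ := ha
  obtain ⟨w₂, g1, g2, g3⟩ := hb
  refine ⟨w₁ ++ w₂, by simp [h1, g1], ?_, by simp [h3, g3]⟩
  intro y hy
  rcases List.mem_append.1 hy with h | h
  · exact h2 y h
  · exact g2 y h

theorem Wit.one : Wit 1 0 := ⟨[], rfl, by simp, rfl⟩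

theorem Wit.single {y : ThompsonF} (h : y ∈ gens) : Wit y 1 :=
  ⟨[y], rfl, by simpa using h, by simp⟩

theorem Wit.pow {a : ThompsonF} {p : ℕ} (ha : Wit a p) (t : ℕ) : Wit (a ^ t) (t * p) := by
  induction t with
  | zero => simpa using Wit.one
  | succ t iht =>
      have := iht.mul ha
      rw [pow_succ] at *
      simpa [Nat.succ_mul] using this

theorem gens_inv {y : ThompsonF} (h : y ∈ gens) : y⁻¹ ∈ gens := by
  rcases h with h | h | h | h <;> subst h <;> simp [gens]

theorem Wit.inv {a : ThompsonF} {p : ℕ} (ha : Wit a p) : Wit a⁻¹ p := by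
  obtain ⟨w, h1, h2, h3⟩ := ha
  refine ⟨(w.map fun y => y⁻¹).reverse, by simp [h1], ?_, ?_⟩
  · intro y hy
    simp only [List.mem_reverse, List.mem_map] at hy
    obtain ⟨z, hz, rfl⟩ := hy
    exact gens_inv (h2 z hz)
  · rw [← h3, List.prod_inv_reverse]

theorem x_mem_gens (k : ℕ) (hk : k ≤ 1) : x k ∈ gens := by
  interval_cases k
  · exact Or.inl rfl
  · exact Or.inr (Or.inr (Or.inl rfl))

/-- The defining relation: `x_{k+1} = x_0⁻¹ x_k x_0` for `k ≥ 1`. -/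
theorem x_succ (k : ℕ) (hk : 0 < k) : x (k + 1) = (x 0)⁻¹ * x k * x 0 := by
  have hr : (FreeGroup.of k * FreeGroup.of 0 * (FreeGroup.of (k + 1))⁻¹ *
      (FreeGroup.of 0)⁻¹ : FreeGroup ℕ) ∈ thompsonRels := ⟨0, k, hk, rfl⟩
  have h1 : PresentedGroup.mk thompsonRels
      (FreeGroup.of k * FreeGroup.of 0 * (FreeGroup.of (k + 1))⁻¹ * (FreeGroup.of 0)⁻¹) = 1 := by
    have : (FreeGroup.of k * FreeGroup.of 0 * (FreeGroup.of (k + 1))⁻¹ *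
        (FreeGroup.of 0)⁻¹ : FreeGroup ℕ) ∈ Subgroup.normalClosure thompsonRels :=
      Subgroup.subset_normalClosure hr
    exact (QuotientGroup.eq_one_iff _).2 this
  have h2 : x k * x 0 * (x (k + 1))⁻¹ * (x 0)⁻¹ = 1 := by
    simpa [x, PresentedGroup.of, map_mul, map_inv] using h1
  rw [mul_inv_eq_one] at h2
  have h3 : x k * x 0 = x 0 * x (k + 1) := by
    have := congrArg (fun z => z * x (k + 1)) h2
    simpa [mul_assoc] using this
  rw [mul_assoc, h3]
  group

/-- `hx k` is `x 0` if `k = 0` and `x 1` otherwise. -/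
def hx (k : ℕ) : ThompsonF := if k = 0 then x 0 else x 1

theorem hx_mem (k : ℕ) : hx k ∈ gens := by
  unfold hx; split
  · exact Or.inl rfl
  · exact Or.inr (Or.inr (Or.inl rfl))

theorem x_eq_conj (k : ℕ) : x k = ((x 0) ^ (k - 1))⁻¹ * hx k * (x 0) ^ (k - 1) := by
  induction k with
  | zero => simp [hx]
  | succ k ih =>
      rcases Nat.eq_zero_or_pos k with rfl | hk
      · simp [hx]
      · have : x (k + 1) = (x 0)⁻¹ * x k * x 0 := x_succ k hk
        rw [this, ih]
        have hk1 : k - 1 + 1 = k := Nat.succ_pred_eq_of_pos hk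
        have hhx : hx k = hx (k + 1) := by
          unfold hx
          simp [Nat.pos_iff_ne_zero.1 hk]
        rw [hhx]
        have : (k + 1) - 1 = (k - 1) + 1 := by omega
        rw [this, pow_succ]
        group

theorem wit_xpow (k t : ℕ) : Wit (x k ^ t * ((x 0) ^ (k - 1))⁻¹) ((k - 1) + t) := by
  have h : x k ^ t = ((x 0) ^ (k - 1))⁻¹ * hx k ^ t * (x 0) ^ (k - 1) := by
    conv_lhs => rw [x_eq_conj k]
    rw [show ((x 0) ^ (k - 1))⁻¹ * hx k * (x 0) ^ (k - 1)
        = ((x 0) ^ (k - 1))⁻¹ * hx k * (((x 0) ^ (k - 1))⁻¹)⁻¹ by rw [inv_inv]]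
    rw [conj_pow, inv_inv]
  have hEq : x k ^ t * ((x 0) ^ (k - 1))⁻¹ = ((x 0) ^ (k - 1))⁻¹ * hx k ^ t := by
    rw [h]; group
  rw [hEq]
  have w1 : Wit (((x 0) ^ (k - 1))⁻¹) (k - 1) := by
    have := ((Wit.single (x_mem_gens 0 (by norm_num))).pow (k - 1)).inv
    simpa using this
  have w2 : Wit (hx k ^ t) t := by
    have := (Wit.single (hx_mem k)).pow t
    simpa using this
  exact w1.mul w2

theorem wit_x0pow (t : ℕ) : Wit ((x 0) ^ t) t := by
  have := (Wit.single (x_mem_gens 0 (by norm_num))).pow t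
  simpa using this

/-- Telescoped word for the positive part. -/
theorem witP (i e : ℕ → ℕ) :
    ∀ m : ℕ, 0 < m → (∀ a b, a < b → b < m → i a < i b) →
      Wit ((((List.range m).map fun l => x (i l) ^ e l).prod) * ((x 0) ^ (i (m - 1) - 1))⁻¹)
        (∑ l ∈ Finset.range m, e l + (i (m - 1) - 1)) := by
  intro m
  induction m with
  | zero => intro h; omega
  | succ m ih =>
      intro _ hmono
      simp only [Nat.add_sub_cancel]
      rcases Nat.eq_zero_or_pos m with rfl | hm
      · simpa [List.range_succ, add_comm] using wit_xpow (i 0) (e 0)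
      · have hmono' : ∀ a b, a < b → b < m → i a < i b := fun a b hab hb =>
          hmono a b hab (by omega)
        have ihm := ih hm hmono'
        have hle : i (m - 1) - 1 ≤ i m - 1 := by
          have : i (m - 1) < i m := hmono (m - 1) m (by omega) (by omega)
          omega
        set b' : ℕ := i (m - 1) - 1 with hb'
        set bm : ℕ := i m - 1 with hbm
        have hsplit : (((List.range (m + 1)).map fun l => x (i l) ^ e l).prod)
            = (((List.range m).map fun l => x (i l) ^ e l).prod) * x (i m) ^ e m := by
          rw [List.range_succ, List.map_append, List.prod_append]
          simp
        have key : (((List.range (m + 1)).map fun l => x (i l) ^ e l).prod) * ((x 0) ^ bm)⁻¹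
            = ((((List.range m).map fun l => x (i l) ^ e l).prod) * ((x 0) ^ b')⁻¹)
              * ((x 0) ^ b' * (x (i m) ^ e m * ((x 0) ^ bm)⁻¹)) := by
          rw [hsplit]; group
        rw [key]
        have wmid : Wit ((x 0) ^ b' * (x (i m) ^ e m * ((x 0) ^ bm)⁻¹)) ((bm - b') + e m) := by
          have hx' : x (i m) ^ e m * ((x 0) ^ bm)⁻¹
              = ((x 0) ^ bm)⁻¹ * hx (i m) ^ e m := by
            have h : x (i m) ^ e m = ((x 0) ^ bm)⁻¹ * hx (i m) ^ e m * (x 0) ^ bm := by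
              conv_lhs => rw [x_eq_conj (i m)]
              rw [show ((x 0) ^ bm)⁻¹ * hx (i m) * (x 0) ^ bm
                  = ((x 0) ^ bm)⁻¹ * hx (i m) * (((x 0) ^ bm)⁻¹)⁻¹ by rw [inv_inv]]
              rw [conj_pow, inv_inv]
            rw [h]; group
          rw [hx']
          have hmerge : (x 0) ^ b' * ((x 0) ^ bm)⁻¹ = (((x 0) ^ (bm - b'))⁻¹) := by
            have hsum : b' + (bm - b') = bm := by omega
            have h2 : (x 0) ^ bm = (x 0) ^ b' * (x 0) ^ (bm - b') := by
              rw [← pow_add, hsum]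
            rw [h2]; group
          have : (x 0) ^ b' * (((x 0) ^ bm)⁻¹ * hx (i m) ^ e m)
              = ((x 0) ^ (bm - b'))⁻¹ * hx (i m) ^ e m := by
            rw [← mul_assoc, hmerge]
          rw [this]
          have w1 : Wit (((x 0) ^ (bm - b'))⁻¹) (bm - b') := (wit_x0pow (bm - b')).inv
          have w2 : Wit (hx (i m) ^ e m) (e m) := by
            have := (Wit.single (hx_mem (i m))).pow (e m)
            simpa using this
          exact w1.mul w2
        have wtot := ihm.mul wmid
        have hlen : (∑ l ∈ Finset.range m, e l + b') + ((bm - b') + e m)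
            = ∑ l ∈ Finset.range (m + 1), e l + bm := by
          rw [Finset.sum_range_succ]; omega
        rw [← hlen]
        simpa using wtot

end LinfAux

open LinfAux in
/-- Let `g ∈ F` have standard infinite normal form
`x_{i 0}^{e 0} ⋯ x_{i (m-1)}^{e (m-1)} x_{j (n-1)}^{-f (n-1)} ⋯ x_{j 0}^{-f 0}`
(with strictly increasing indices and positive exponents), let
`D = Σ e + Σ f + i_m + j_n` and let `D' = Σ e + Σ f + max{i_m, j_n}` be the length
of its `L_∞` normal form.  Assuming Burillo's bounds `D/6 - 2 ≤ l(g) ≤ 3D`, one has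
`D' ≤ D ≤ 2D'` and consequently `D'/12 - 2 ≤ l(g) ≤ 3 D'`; hence `L_∞` is a
quasigeodesic normal form. -/
theorem Linf_quasigeodesic (m n : ℕ) (hm : 0 < m) (hn : 0 < n)
    (i j e f : ℕ → ℕ)
    (hi : ∀ a b, a < b → b < m → i a < i b) (hj : ∀ a b, a < b → b < n → j a < j b)
    (he : ∀ l < m, 0 < e l) (hf : ∀ l < n, 0 < f l)
    (g : ThompsonF)
    (hg : g = (((List.range m).map fun l => x (i l) ^ e l).prod) *
      (((List.range n).reverse.map fun l => (x (j l))⁻¹ ^ f l).prod))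
    (D D' : ℕ)
    (hD : D = ∑ l ∈ Finset.range m, e l + ∑ l ∈ Finset.range n, f l
      + i (m - 1) + j (n - 1))
    (hD' : D' = ∑ l ∈ Finset.range m, e l + ∑ l ∈ Finset.range n, f l
      + max (i (m - 1)) (j (n - 1)))
    (hBur₁ : (D : ℝ) / 6 - 2 ≤ wlen g) (hBur₂ : (wlen g : ℝ) ≤ 3 * D) :
    D' ≤ D ∧ D ≤ 2 * D' ∧
      (D' : ℝ) / 12 - 2 ≤ wlen g ∧ (wlen g : ℝ) ≤ 3 * D' := by
  set I := i (m - 1)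
  set J := j (n - 1)
  set B : ℕ := I - 1
  set C : ℕ := J - 1
  set P : ThompsonF := (((List.range m).map fun l => x (i l) ^ e l).prod)
  set N : ThompsonF := (((List.range n).reverse.map fun l => (x (j l))⁻¹ ^ f l).prod)
  -- positive part
  have hP : Wit (P * ((x 0) ^ B)⁻¹) (∑ l ∈ Finset.range m, e l + B) := witP i e m hm hi
  -- negative part: N⁻¹ is of positive form
  have hNinv : N⁻¹ = (((List.range n).map fun l => x (j l) ^ f l).prod) := by
    rw [List.prod_inv_reverse]
    congr 1
    rw [List.map_reverse, List.map_reverse, List.reverse_reverse, List.map_map]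
    apply List.map_congr_left
    intro a _
    simp
  have hN' : Wit (N⁻¹ * ((x 0) ^ C)⁻¹) (∑ l ∈ Finset.range n, f l + C) := by
    rw [hNinv]
    exact witP j f n hn hj
  have hN : Wit ((x 0) ^ C * N) (∑ l ∈ Finset.range n, f l + C) := by
    have := hN'.inv
    simpa [mul_inv_rev] using this
  -- middle
  have hMid : Wit ((x 0) ^ B * ((x 0) ^ C)⁻¹) ((B - C) + (C - B)) := by
    rcases le_total B C with h | h
    · have hmerge : (x 0) ^ B * ((x 0) ^ C)⁻¹ = ((x 0) ^ (C - B))⁻¹ := by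
        have hsum : B + (C - B) = C := by omega
        have h2 : (x 0) ^ C = (x 0) ^ B * (x 0) ^ (C - B) := by rw [← pow_add, hsum]
        rw [h2]; group
      rw [hmerge]
      have := (wit_x0pow (C - B)).inv
      have hlen : (B - C) + (C - B) = C - B := by omega
      rw [hlen]
      exact this
    · have hmerge : (x 0) ^ B * ((x 0) ^ C)⁻¹ = (x 0) ^ (B - C) := by
        have hsum : C + (B - C) = B := by omega
        have h2 : (x 0) ^ B = (x 0) ^ C * (x 0) ^ (B - C) := by rw [← pow_add, hsum]
        rw [h2]; group
      rw [hmerge]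
      have := wit_x0pow (B - C)
      have hlen : (B - C) + (C - B) = B - C := by omega
      rw [hlen]
      exact this
  have hgdecomp : g = (P * ((x 0) ^ B)⁻¹) * ((x 0) ^ B * ((x 0) ^ C)⁻¹) * ((x 0) ^ C * N) := by
    rw [hg]; group
  have hwit : Wit g ((∑ l ∈ Finset.range m, e l + B) + ((B - C) + (C - B))
      + (∑ l ∈ Finset.range n, f l + C)) := by
    rw [hgdecomp]
    exact (hP.mul hMid).mul hN
  have hwlen := wlen_le hwit
  have hmax1 : I ≤ max I J := le_max_left _ _
  have hmax2 : J ≤ max I J := le_max_right _ _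
  have hmax3 : max I J = I ∨ max I J = J := max_choice _ _
  have hwlen2 : wlen g ≤ 2 * D' := by
    rcases hmax3 with h | h <;> omega
  refine ⟨?_, ?_, ?_, ?_⟩
  · rcases hmax3 with h | h <;> omega
  · rcases hmax3 with h | h <;> omega
  · have hDD : D' ≤ 2 * D := by rcases hmax3 with h | h <;> omega
    have : (D' : ℝ) ≤ 2 * D := by exact_mod_cast hDD
    linarith
  · have h1 : (wlen g : ℝ) ≤ 2 * D' := by exact_mod_cast hwlen2
    have h2 : (0 : ℝ) ≤ D' := by positivity
    linarith
end

section
/- Let w = x_{i_0}^{e_0} ⋯ x_{i_m}^{e_m} x_{j_n}^{-f_n} ⋯ x_{j_1}^{-f_1} x_0^{-f_0} be a reduced infinite normal form in F with f_0 ≥ 1. Then in F, w x_1^{-1} equals x_{i_0}^{e_0} ⋯ x_{i_m}^{e_m} x_{j_n}^{-f_n} ⋯ x_{j_{t+1}}^{-f_{t+1}} x_R^{-1} x_{j_t}^{-f_t} ⋯ x_0^{-f_0}, where R = 1 + f_0 + f_1 + ⋯ + f_t and t is the least index such that either t = n (and R > j_n) or R ≤ j_{t+1}. -/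
lemma xrel {a b : ℕ} (h : a < b) : (x a)⁻¹ * (x b)⁻¹ = (x (b + 1))⁻¹ * (x a)⁻¹ := by
  have hmem : (FreeGroup.of b * FreeGroup.of a * (FreeGroup.of (b + 1))⁻¹ * (FreeGroup.of a)⁻¹ :
      FreeGroup ℕ) ∈ Subgroup.normalClosure thompsonRels :=
    Subgroup.subset_normalClosure ⟨a, b, h, rfl⟩
  have h1 : x b * x a * (x (b + 1))⁻¹ * (x a)⁻¹ = 1 := by
    have := (QuotientGroup.eq_one_iff
      (FreeGroup.of b * FreeGroup.of a * (FreeGroup.of (b + 1))⁻¹ * (FreeGroup.of a)⁻¹ :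
        FreeGroup ℕ)).mpr hmem
    exact this
  have h2 : x b * x a = x a * x (b + 1) := by
    calc x b * x a = (x b * x a * (x (b + 1))⁻¹ * (x a)⁻¹) * (x a * x (b + 1)) := by group
      _ = 1 * (x a * x (b + 1)) := by rw [h1]
      _ = x a * x (b + 1) := one_mul _
  calc (x a)⁻¹ * (x b)⁻¹ = (x b * x a)⁻¹ := by group
    _ = (x a * x (b + 1))⁻¹ := by rw [h2]
    _ = (x (b + 1))⁻¹ * (x a)⁻¹ := by group

lemma xpow {a b : ℕ} (h : a < b) (k : ℕ) :
    (x a)⁻¹ ^ k * (x b)⁻¹ = (x (b + k))⁻¹ * (x a)⁻¹ ^ k := by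
  induction k generalizing b with
  | zero => simp
  | succ k ih =>
    have hab1 : a < b + 1 := Nat.lt_succ_of_lt h
    calc (x a)⁻¹ ^ (k + 1) * (x b)⁻¹ = (x a)⁻¹ ^ k * ((x a)⁻¹ * (x b)⁻¹) := by
          rw [pow_succ]; group
      _ = (x a)⁻¹ ^ k * ((x (b + 1))⁻¹ * (x a)⁻¹) := by rw [xrel h]
      _ = ((x a)⁻¹ ^ k * (x (b + 1))⁻¹) * (x a)⁻¹ := by group
      _ = ((x (b + 1 + k))⁻¹ * (x a)⁻¹ ^ k) * (x a)⁻¹ := by rw [ih hab1]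
      _ = (x (b + (k + 1)))⁻¹ * (x a)⁻¹ ^ (k + 1) := by
          have : b + 1 + k = b + (k + 1) := by omega
          rw [this, pow_succ]
          group

lemma push_core (j f : ℕ → ℕ) (t : ℕ) (hj : ∀ l ≤ t, j l < 1 + ∑ k ∈ Finset.range l, f k) :
    (((List.range (t + 1)).reverse.map fun l => (x (j l))⁻¹ ^ f l).prod) * (x 1)⁻¹ =
    (x (1 + ∑ l ∈ Finset.range (t + 1), f l))⁻¹ *
      (((List.range (t + 1)).reverse.map fun l => (x (j l))⁻¹ ^ f l).prod) := by
  induction t with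
  | zero =>
    have h0 : j 0 < 1 := by simpa using hj 0 le_rfl
    have hr : List.range 1 = [0] := rfl
    simp only [Finset.range_one, Finset.sum_singleton, hr, List.reverse_cons,
      List.reverse_nil, List.nil_append, List.map_cons, List.map_nil, List.prod_cons,
      List.prod_nil, mul_one]
    have hsum : (1 + ∑ l ∈ Finset.range (0 + 1), f l) = 1 + f 0 := by
      simp
    rw [hsum]
    exact xpow h0 (f 0)
  | succ t ih =>
    have ih' := ih fun l hl => hj l (hl.trans (Nat.le_succ t))
    have hsplit : List.range (t + 2) = List.range (t + 1) ++ [t + 1] := by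
      simp [List.range_succ]
    rw [hsplit]
    simp only [List.reverse_append, List.map_append, List.prod_append, List.map_cons,
      List.prod_cons, List.reverse_cons, List.reverse_nil, List.nil_append, List.map_nil,
      List.prod_nil, mul_one]
    have hjt : j (t + 1) < 1 + ∑ k ∈ Finset.range (t + 1), f k := hj (t + 1) le_rfl
    calc (x (j (t+1)))⁻¹ ^ f (t+1) * ((List.range (t + 1)).reverse.map
            fun l => (x (j l))⁻¹ ^ f l).prod * (x 1)⁻¹
        = (x (j (t+1)))⁻¹ ^ f (t+1) * (((List.range (t + 1)).reverse.map
            fun l => (x (j l))⁻¹ ^ f l).prod * (x 1)⁻¹) := by group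
      _ = (x (j (t+1)))⁻¹ ^ f (t+1) * ((x (1 + ∑ l ∈ Finset.range (t + 1), f l))⁻¹ *
            ((List.range (t + 1)).reverse.map fun l => (x (j l))⁻¹ ^ f l).prod) := by rw [ih']
      _ = ((x (j (t+1)))⁻¹ ^ f (t+1) * (x (1 + ∑ l ∈ Finset.range (t + 1), f l))⁻¹) *
            ((List.range (t + 1)).reverse.map fun l => (x (j l))⁻¹ ^ f l).prod := by group
      _ = ((x (1 + ∑ l ∈ Finset.range (t + 1), f l + f (t+1)))⁻¹ * (x (j (t+1)))⁻¹ ^ f (t+1)) *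
            ((List.range (t + 1)).reverse.map fun l => (x (j l))⁻¹ ^ f l).prod := by
          rw [xpow hjt]
      _ = (x (1 + ∑ l ∈ Finset.range (t + 2), f l))⁻¹ * ((x (j (t+1)))⁻¹ ^ f (t+1) *
            ((List.range (t + 1)).reverse.map fun l => (x (j l))⁻¹ ^ f l).prod) := by
          rw [Finset.sum_range_succ (n := t + 1), ← add_assoc]
          group

/-- Let `w = x_{i 0}^{e 0} ⋯ x_{i m}^{e m} x_{j n}^{-f n} ⋯ x_{j 1}^{-f 1} x_0^{-f 0}`
be a reduced infinite normal form in Thompson's group `F` with `f 0 ≥ 1`.  Pushing the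
trailing `x_1⁻¹` leftward using the relations `x_i⁻¹ x_j⁻¹ = x_{j+1}⁻¹ x_i⁻¹` (`i < j`),
one gets, with `R t = 1 + f 0 + ⋯ + f t` and `t` the least index such that either
`t = n` (and then `R t > j n`) or `R t ≤ j (t+1)`:
`w x_1⁻¹ = x_{i 0}^{e 0} ⋯ x_{i m}^{e m} x_{j n}^{-f n} ⋯ x_{j (t+1)}^{-f (t+1)}
  x_{R t}⁻¹ x_{j t}^{-f t} ⋯ x_0^{-f 0}`. -/
theorem push_x1_inv_left (m n : ℕ) (i j e f : ℕ → ℕ)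
    (hi : ∀ a b, a < b → b ≤ m → i a < i b)
    (hjmono : ∀ a b, a < b → b ≤ n → j a < j b)
    (hj0 : j 0 = 0)
    (he : ∀ l ≤ m, 0 < e l) (hf : ∀ l ≤ n, 0 < f l)
    (t : ℕ) (ht : t ≤ n)
    (htcase : (t = n ∧ j n < 1 + ∑ l ∈ Finset.range (t + 1), f l) ∨
      1 + ∑ l ∈ Finset.range (t + 1), f l ≤ j (t + 1))
    (htmin : ∀ t' < t, ¬((t' = n ∧ j n < 1 + ∑ l ∈ Finset.range (t' + 1), f l) ∨
      1 + ∑ l ∈ Finset.range (t' + 1), f l ≤ j (t' + 1))) :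
    (((List.range (m + 1)).map fun l => x (i l) ^ e l).prod) *
      (((List.range (n + 1)).reverse.map fun l => (x (j l))⁻¹ ^ f l).prod) * (x 1)⁻¹ =
    (((List.range (m + 1)).map fun l => x (i l) ^ e l).prod) *
      (((List.range' (t + 1) (n - t)).reverse.map fun l => (x (j l))⁻¹ ^ f l).prod) *
      (x (1 + ∑ l ∈ Finset.range (t + 1), f l))⁻¹ *
      (((List.range (t + 1)).reverse.map fun l => (x (j l))⁻¹ ^ f l).prod) := by
  have hj : ∀ l ≤ t, j l < 1 + ∑ k ∈ Finset.range l, f k := by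
    intro l hl
    cases l with
    | zero => simpa [hj0] using Nat.zero_lt_one
    | succ l =>
      have hlt : l < t := hl
      have := htmin l hlt
      push_neg at this
      exact this.2
  have hadd : (t + 1) + (n - t) = n + 1 := by omega
  have hsplit : List.range (n + 1) = List.range (t + 1) ++ List.range' (t + 1) (n - t) := by
    rw [← hadd, List.range_eq_range']
    have := List.range'_append_1 (s := 0) (m := t + 1) (n := n - t)
    rw [Nat.zero_add] at this
    rw [← this, List.range_eq_range']
  rw [hsplit, List.reverse_append, List.map_append, List.prod_append]
  set A := ((List.range (m + 1)).map fun l => x (i l) ^ e l).prod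
  set B := ((List.range' (t + 1) (n - t)).reverse.map fun l => (x (j l))⁻¹ ^ f l).prod
  set C := ((List.range (t + 1)).reverse.map fun l => (x (j l))⁻¹ ^ f l).prod
  have key : C * (x 1)⁻¹ = (x (1 + ∑ l ∈ Finset.range (t + 1), f l))⁻¹ * C :=
    push_core j f t hj
  calc A * (B * C) * (x 1)⁻¹ = A * B * (C * (x 1)⁻¹) := by group
    _ = A * B * ((x (1 + ∑ l ∈ Finset.range (t + 1), f l))⁻¹ * C) := by rw [key]
    _ = A * B * (x (1 + ∑ l ∈ Finset.range (t + 1), f l))⁻¹ * C := by group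
end
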